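/- Every monotone (nondecreasing) quasi-isometry g : α → β between strings witnesses componentwise reducibility: there exist partitions α = u₁u₂⋯ and β = v₁v₂⋯ into finite nonempty blocks of uniformly bounded length such that every letter of uₙ occurs in vₙ for every n. -/
import Mathlib


def IsQI {Γ : Type*} (α β : ℕ → Γ) (f : ℕ → ℕ) (A B : ℝ) : Prop :=
  1 ≤ A ∧ 0 ≤ B ∧ (∀ n, α n = β (f n)) ∧
  (∀ x y : ℕ, (1 / A) * |(x : ℝ) - (y : ℝ)| - B ≤ |(f x : ℝ) - (f y : ℝ)| ∧
      |(f x : ℝ) - (f y : ℝ)| ≤ A * |(x : ℝ) - (y : ℝ)| + B) ∧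
  (∀ m : ℕ, ∃ x : ℕ, |(m : ℝ) - (f x : ℝ)| ≤ A)

/-- `α ≤_QI β`: there is a quasi-isometry from `α` to `β`. -/
def QI {Γ : Type*} (α β : ℕ → Γ) : Prop := ∃ f A B, IsQI α β f A B

/-- Breakpoints: `qiN g hex 0 = 0`, and the next breakpoint is the first place
after the current one where `g` strictly increases. -/
def qiN (g : ℕ → ℕ) (hex : ∀ x : ℕ, ∃ d, 0 < d ∧ g x < g (x + d)) : ℕ → ℕ
  | 0 => 0
  | k + 1 => qiN g hex k + Nat.find (hex (qiN g hex k))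

/-- Every monotone quasi-isometry `g : α → β` witnesses componentwise reducibility:
there are partitions of `α` and `β` into consecutive nonempty blocks of lengths
uniformly bounded by some `C`, with every letter of the `k`-th block of `α` occurring
in the `k`-th block of `β`. -/
theorem monotone_QI_componentwise {Γ : Type*} (α β : ℕ → Γ) (g : ℕ → ℕ) (A B : ℝ)
    (h : IsQI α β g A B) (hmono : Monotone g) :
    ∃ (C : ℕ) (ℓ m : ℕ → ℕ),
      (∀ k, 1 ≤ ℓ k ∧ ℓ k ≤ C) ∧ (∀ k, 1 ≤ m k ∧ m k ≤ C) ∧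
      ∀ k p : ℕ, (Finset.range k).sum ℓ ≤ p → p < (Finset.range (k + 1)).sum ℓ →
        ∃ q : ℕ, (Finset.range k).sum m ≤ q ∧ q < (Finset.range (k + 1)).sum m ∧ α p = β q := by
  obtain ⟨hA, hB, hcol, hQI, _⟩ := h
  have hA0 : (0:ℝ) < A := lt_of_lt_of_le one_pos hA
  have habs : ∀ x y : ℕ, x ≤ y → |(x:ℝ) - y| = (y:ℝ) - x := by
    intro x y hxy
    rw [abs_sub_comm, abs_of_nonneg (sub_nonneg.2 (by exact_mod_cast hxy))]
  have hgabs : ∀ x y : ℕ, x ≤ y → |(g x:ℝ) - g y| = (g y:ℝ) - g x := by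
    intro x y hxy
    exact habs _ _ (hmono hxy)
  have hlow : ∀ x d : ℕ, (1 / A) * d - B ≤ (g (x + d):ℝ) - g x := by
    intro x d
    have := (hQI x (x + d)).1
    rwa [habs x (x + d) (Nat.le_add_right _ _), hgabs x (x + d) (Nat.le_add_right _ _),
      Nat.cast_add, add_sub_cancel_left] at this
  have hupp : ∀ x d : ℕ, (g (x + d):ℝ) - g x ≤ A * d + B := by
    intro x d
    have := (hQI x (x + d)).2
    rwa [habs x (x + d) (Nat.le_add_right _ _), hgabs x (x + d) (Nat.le_add_right _ _),
      Nat.cast_add, add_sub_cancel_left] at this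
  set W : ℕ := ⌈A * (B + 1)⌉₊ with hWdef
  have hWpos : 0 < W := Nat.ceil_pos.2 (by positivity)
  have hW : ∀ x : ℕ, g x < g (x + W) := by
    intro x
    have h1 : (A * (B + 1) : ℝ) ≤ (W : ℝ) := Nat.le_ceil _
    have h2 : (1 / A) * (A * (B + 1)) ≤ (1 / A) * W :=
      mul_le_mul_of_nonneg_left h1 (by positivity)
    have h3 : (1 / A) * (A * (B + 1)) = B + 1 := by field_simp
    have h4 : (1:ℝ) ≤ (g (x + W):ℝ) - g x := by
      have := hlow x W
      linarith
    have : (g x : ℝ) < (g (x + W) : ℝ) := by linarith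
    exact_mod_cast this
  have hex : ∀ x : ℕ, ∃ d, 0 < d ∧ g x < g (x + d) := fun x => ⟨W, hWpos, hW x⟩
  set n : ℕ → ℕ := qiN g hex with hn
  have hnsucc : ∀ k, n (k + 1) = n k + Nat.find (hex (n k)) := fun k => rfl
  -- step bounds
  have hstep_pos : ∀ x : ℕ, 0 < Nat.find (hex x) := fun x => (Nat.find_spec (hex x)).1
  have hstep_le : ∀ x : ℕ, Nat.find (hex x) ≤ W := fun x => Nat.find_le ⟨hWpos, hW x⟩
  have hstep_inc : ∀ x : ℕ, g x < g (x + Nat.find (hex x)) := fun x => (Nat.find_spec (hex x)).2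
  have hconst : ∀ x e : ℕ, e < Nat.find (hex x) → g (x + e) = g x := by
    intro x e he
    rcases Nat.eq_zero_or_pos e with he0 | he0
    · simp [he0]
    · have := Nat.find_min (hex x) he
      push_neg at this
      exact le_antisymm (this he0) (hmono (Nat.le_add_right _ _))
  -- block lengths
  set ℓ : ℕ → ℕ := fun k => Nat.find (hex (n k)) with hℓ
  set M : ℕ → ℕ := fun k => if k = 0 then 0 else g (n k) with hM
  set m : ℕ → ℕ := fun k => g (n (k + 1)) - M k with hm
  have hMle : ∀ k, M k ≤ g (n k) := by
    intro k
    simp only [hM]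
    split <;> simp
  have hMlt : ∀ k, M k < g (n (k + 1)) := fun k =>
    lt_of_le_of_lt (hMle k) (by rw [hnsucc]; exact hstep_inc (n k))
  have hsumℓ : ∀ k, (Finset.range k).sum ℓ = n k := by
    intro k
    induction k with
    | zero => simp [hn, qiN]
    | succ k ih => rw [Finset.sum_range_succ, ih, hnsucc]
  have hsumm : ∀ k, (Finset.range k).sum m = M k := by
    intro k
    induction k with
    | zero => simp [hM]
    | succ k ih =>
      rw [Finset.sum_range_succ, ih]
      have h1 : M k ≤ g (n (k + 1)) := (hMlt k).le
      have h2 : M (k + 1) = g (n (k + 1)) := by simp [hM]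
      have h3 : m k = g (n (k + 1)) - M k := rfl
      omega
  -- the uniform bound
  set C : ℕ := g 0 + ⌈A * W + B⌉₊ + W + 1 with hC
  have hgstep : ∀ k, g (n (k + 1)) ≤ g (n k) + ⌈A * W + B⌉₊ := by
    intro k
    have h1 : (g (n (k + 1)):ℝ) - g (n k) ≤ A * (ℓ k) + B := by
      rw [hnsucc]; exact hupp (n k) _
    have h2 : (ℓ k : ℝ) ≤ (W : ℝ) := by exact_mod_cast hstep_le (n k)
    have h3 : (A * W + B : ℝ) ≤ (⌈A * W + B⌉₊ : ℝ) := Nat.le_ceil _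
    have h4 : (g (n (k + 1)):ℝ) ≤ (g (n k):ℝ) + (⌈A * W + B⌉₊ : ℝ) := by nlinarith
    exact_mod_cast h4
  have hgM : ∀ k, g (n k) ≤ M k + g 0 := by
    intro k
    simp only [hM]
    split
    · next h0 => subst h0; simp [hn, qiN]
    · simp
  refine ⟨C, ℓ, m, ?_, ?_, ?_⟩
  · intro k
    exact ⟨hstep_pos (n k), le_trans (hstep_le (n k)) (by omega)⟩
  · intro k
    constructor
    · have := hMlt k; simp only [hm]; omega
    · have h1 := hgstep k
      have h2 := hgM k
      simp only [hm]
      omega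
  · intro k p hp1 hp2
    rw [hsumℓ] at hp1 hp2
    refine ⟨g (n k), ?_, ?_, ?_⟩
    · rw [hsumm]; exact hMle k
    · rw [hsumm, hM]; simp only [Nat.succ_ne_zero, if_false]
      rw [hnsucc]; exact hstep_inc (n k)
    · rw [hcol p]
      congr 1
      have : p = n k + (p - n k) := by omega
      rw [this]
      exact hconst (n k) (p - n k) (by rw [hnsucc] at hp2; omega)
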